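/- arXiv:1703.03338 — 8 statements merged into one kernel-verified Lean document; each statement's English description precedes it below -/
import Mathlib

section
/- Fix a positive integer ν, a nonzero vector h ∈ ℂ^ν, a nonzero complex number g, and real numbers P > 0 and σ² > 0; set ρ = σ²/P, a = ‖h‖² and b = |g|², and let ω = ((a + b + ρ) − √((a + b + ρ)² − 4ab)) / (2b). Define the precoding vectors m₁* = (√(a − ω²b)/a)·h and m₂* = (−ω g / a)·h. Then ‖m₁*‖² + ‖m₂*‖² ≤ 1, and for every pair of vectors m₁, m₂ ∈ ℂ^ν satisfying ‖m₁‖² + ‖m₂‖² ≤ 1 one has Γ(m₁, m₂) ≤ Γ(m₁*, m₂*), i.e. the stated precoder maximizes the SINR subject to the unit total-power constraint. -/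
set_option maxHeartbeats 1000000 in
/-- The precoder `(m₁*, m₂*)` built from
`ω = ((a+b+ρ) − √((a+b+ρ)² − 4ab))/(2b)` satisfies the unit total-power
constraint and maximizes the SINR
`Γ(m₁, m₂) = |⟨h, m₁⟩|² P / (|⟨h, m₂⟩ + g|² P + σ²)` among all precoders
satisfying `‖m₁‖² + ‖m₂‖² ≤ 1`. -/
theorem stmt0 (ν : ℕ) (hν : 0 < ν) (h : EuclideanSpace ℂ (Fin ν)) (hh : h ≠ 0)
    (g : ℂ) (hg : g ≠ 0) (P σ2 : ℝ) (hP : 0 < P) (hσ : 0 < σ2) :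
    let ρ : ℝ := σ2 / P
    let a : ℝ := ‖h‖ ^ 2
    let b : ℝ := ‖g‖ ^ 2
    let ω : ℝ := ((a + b + ρ) - Real.sqrt ((a + b + ρ) ^ 2 - 4 * a * b)) / (2 * b)
    let Γ : EuclideanSpace ℂ (Fin ν) → EuclideanSpace ℂ (Fin ν) → ℝ := fun m₁ m₂ =>
      ‖(inner ℂ h m₁ : ℂ)‖ ^ 2 * P /
        (‖(inner ℂ h m₂ : ℂ) + g‖ ^ 2 * P + σ2)
    let m₁s : EuclideanSpace ℂ (Fin ν) :=
      ((Real.sqrt (a - ω ^ 2 * b) / a : ℝ) : ℂ) • h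
    let m₂s : EuclideanSpace ℂ (Fin ν) := (-(ω : ℂ) * g / (a : ℂ)) • h
    ‖m₁s‖ ^ 2 + ‖m₂s‖ ^ 2 ≤ 1 ∧
      ∀ m₁ m₂ : EuclideanSpace ℂ (Fin ν),
        ‖m₁‖ ^ 2 + ‖m₂‖ ^ 2 ≤ 1 → Γ m₁ m₂ ≤ Γ m₁s m₂s := by
  intro ρ a b ω Γ m₁s m₂s
  have hρ' : ρ = σ2 / P := rfl
  have ha' : a = ‖h‖ ^ 2 := rfl
  have hb' : b = ‖g‖ ^ 2 := rfl
  have hρ : 0 < ρ := div_pos hσ hP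
  have hnh : 0 < ‖h‖ := norm_pos_iff.mpr hh
  have ha : 0 < a := by rw [ha']; positivity
  have hga : 0 < ‖g‖ := norm_pos_iff.mpr hg
  have hb : 0 < b := by rw [hb']; exact pow_pos hga 2
  have hσ2 : σ2 = ρ * P := by rw [hρ']; field_simp
  -- discriminant
  have hd : 0 < (a + b + ρ) ^ 2 - 4 * a * b := by
    have e1 : 0 < ρ * (a + b) := mul_pos hρ (by linarith only [ha, hb])
    linarith only [sq_nonneg (a - b), sq_nonneg ρ, e1]
  have hsd : Real.sqrt ((a + b + ρ) ^ 2 - 4 * a * b) ^ 2 = (a + b + ρ) ^ 2 - 4 * a * b :=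
    Real.sq_sqrt hd.le
  have hsd0 : 0 < Real.sqrt ((a + b + ρ) ^ 2 - 4 * a * b) := Real.sqrt_pos.mpr hd
  have hωdef : ω = ((a + b + ρ) - Real.sqrt ((a + b + ρ) ^ 2 - 4 * a * b)) / (2 * b) := rfl
  have h2bω : 2 * b * ω = (a + b + ρ) - Real.sqrt ((a + b + ρ) ^ 2 - 4 * a * b) := by
    rw [hωdef]; field_simp
  have h3 : Real.sqrt ((a + b + ρ) ^ 2 - 4 * a * b) = (a + b + ρ) - 2 * b * ω := by linarith only [h2bω]
  have hsq : ((a + b + ρ) - 2 * b * ω) ^ 2 = (a + b + ρ) ^ 2 - 4 * a * b := by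
    rw [← h3]; exact hsd
  have h4 : (4 * b) * ((a + b + ρ) * ω - b * ω ^ 2 - a) = 0 := by linear_combination -hsq
  have hq : (a + b + ρ) * ω - b * ω ^ 2 - a = 0 :=
    (mul_eq_zero.mp h4).resolve_left (by positivity)
  have hS : 0 < a + b + ρ := by linarith only [ha, hb, hρ]
  have hsdlt : Real.sqrt ((a + b + ρ) ^ 2 - 4 * a * b) < a + b + ρ := by
    have h5 : Real.sqrt ((a + b + ρ) ^ 2 - 4 * a * b) < Real.sqrt ((a + b + ρ) ^ 2) :=
      Real.sqrt_lt_sqrt hd.le (by linarith only [mul_pos ha hb])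
    rwa [Real.sqrt_sq hS.le] at h5
  have hω0 : 0 < ω := by
    rw [hωdef]; exact div_pos (by linarith only [hsdlt]) (by linarith only [hb])
  have hω1 : ω < 1 := by
    have hlt : a + b + ρ - 2 * b < Real.sqrt ((a + b + ρ) ^ 2 - 4 * a * b) := by
      rcases le_or_gt (a + b + ρ - 2 * b) 0 with hc | hc
      · linarith only [hsd0, hc]
      · have h6 : (a + b + ρ - 2 * b) ^ 2 < (a + b + ρ) ^ 2 - 4 * a * b := by
          linarith only [mul_pos hb hρ]
        have h7 : a + b + ρ - 2 * b = Real.sqrt ((a + b + ρ - 2 * b) ^ 2) :=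
          (Real.sqrt_sq hc.le).symm
        rw [h7]
        exact Real.sqrt_lt_sqrt (sq_nonneg _) h6
    rw [hωdef, div_lt_one (by linarith only [hb])]
    linarith only [hlt]
  have hXω : a - ω ^ 2 * b = ω * Real.sqrt ((a + b + ρ) ^ 2 - 4 * a * b) := by
    linear_combination -hq - ω * h3
  have hX : 0 < a - ω ^ 2 * b := by rw [hXω]; exact mul_pos hω0 hsd0
  have hsX : Real.sqrt (a - ω ^ 2 * b) ^ 2 = a - ω ^ 2 * b := Real.sq_sqrt hX.le
  -- inner products with the optimal precoders
  have hhh : (inner ℂ h h : ℂ) = (a : ℂ) := by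
    rw [inner_self_eq_norm_sq_to_K, ha']
    push_cast
    rfl
  have h1i : (inner ℂ h m₁s : ℂ) = ((Real.sqrt (a - ω ^ 2 * b) / a : ℝ) : ℂ) * (a : ℂ) := by
    rw [show (inner ℂ h m₁s : ℂ)
        = ((Real.sqrt (a - ω ^ 2 * b) / a : ℝ) : ℂ) * (inner ℂ h h : ℂ) from
      inner_smul_right _ _ _, hhh]
  have h2i : (inner ℂ h m₂s : ℂ) + g = ((1 : ℂ) - (ω : ℝ)) * g := by
    rw [show (inner ℂ h m₂s : ℂ)
        = (-(ω : ℂ) * g / (a : ℂ)) * (inner ℂ h h : ℂ) from inner_smul_right _ _ _, hhh]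
    have haC : (a : ℂ) ≠ 0 := Complex.ofReal_ne_zero.mpr ha.ne'
    field_simp
    ring
  have hnum : ‖(inner ℂ h m₁s : ℂ)‖ ^ 2 = a - ω ^ 2 * b := by
    rw [h1i, ← Complex.ofReal_mul, Complex.norm_real, Real.norm_eq_abs,
      abs_of_nonneg (by positivity), div_mul_cancel₀ _ ha.ne', hsX]
  have hden : ‖(inner ℂ h m₂s : ℂ) + g‖ ^ 2 = (1 - ω) ^ 2 * b := by
    rw [h2i, norm_mul]
    rw [show ((1 : ℂ) - ((ω : ℝ) : ℂ)) = (((1 - ω : ℝ)) : ℂ) by push_cast; ring]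
    rw [Complex.norm_real, Real.norm_eq_abs, mul_pow, sq_abs, hb']
  -- norms of the optimal precoders
  have hn1 : ‖m₁s‖ ^ 2 = (a - ω ^ 2 * b) / a := by
    rw [show m₁s = ((Real.sqrt (a - ω ^ 2 * b) / a : ℝ) : ℂ) • h from rfl, norm_smul]
    rw [Complex.norm_real, Real.norm_eq_abs, abs_of_nonneg (by positivity)]
    rw [mul_pow, ← ha', div_pow, hsX]
    field_simp
  have hn2 : ‖m₂s‖ ^ 2 = ω ^ 2 * b / a := by
    rw [show m₂s = (-(ω : ℂ) * g / (a : ℂ)) • h from rfl, norm_smul]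
    rw [norm_div, norm_mul, norm_neg, Complex.norm_real,
      Complex.norm_real, Real.norm_eq_abs, Real.norm_eq_abs, abs_of_nonneg hω0.le, abs_of_nonneg ha.le]
    rw [mul_pow, ← ha', div_pow, mul_pow, hb']
    field_simp
  constructor
  · rw [hn1, hn2, ← add_div, div_le_one ha]
    linarith only []
  · intro m₁ m₂ hm
    show ‖(inner ℂ h m₁ : ℂ)‖ ^ 2 * P /
        (‖(inner ℂ h m₂ : ℂ) + g‖ ^ 2 * P + σ2) ≤
      ‖(inner ℂ h m₁s : ℂ)‖ ^ 2 * P /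
        (‖(inner ℂ h m₂s : ℂ) + g‖ ^ 2 * P + σ2)
    rw [hnum, hden]
    set u := ‖(inner ℂ h m₁ : ℂ)‖ with hu'
    set v := ‖(inner ℂ h m₂ : ℂ)‖ with hv'
    set w2 := ‖(inner ℂ h m₂ : ℂ) + g‖ with hw2'
    have hu : 0 ≤ u := norm_nonneg _
    have hv : 0 ≤ v := norm_nonneg _
    have hw2n : 0 ≤ w2 := norm_nonneg _
    have hcs1 : u ≤ ‖h‖ * ‖m₁‖ := by
      rw [hu']; exact norm_inner_le_norm h m₁
    have hcs2 : v ≤ ‖h‖ * ‖m₂‖ := by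
      rw [hv']; exact norm_inner_le_norm h m₂
    have hu2 : u ^ 2 ≤ ‖h‖ ^ 2 * ‖m₁‖ ^ 2 := by
      calc u ^ 2 ≤ (‖h‖ * ‖m₁‖) ^ 2 := pow_le_pow_left₀ hu hcs1 2
      _ = ‖h‖ ^ 2 * ‖m₁‖ ^ 2 := by ring
    have hv2 : v ^ 2 ≤ ‖h‖ ^ 2 * ‖m₂‖ ^ 2 := by
      calc v ^ 2 ≤ (‖h‖ * ‖m₂‖) ^ 2 := pow_le_pow_left₀ hv hcs2 2
      _ = ‖h‖ ^ 2 * ‖m₂‖ ^ 2 := by ring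
    have huv : u ^ 2 + v ^ 2 ≤ a := by
      have h8 : ‖h‖ ^ 2 * (‖m₁‖ ^ 2 + ‖m₂‖ ^ 2) ≤ ‖h‖ ^ 2 * 1 :=
        mul_le_mul_of_nonneg_left hm (sq_nonneg ‖h‖)
      rw [ha']
      linarith only [hu2, hv2, h8]
    have hada : ‖g‖ ≤ w2 + v := by
      have h9 : ((inner ℂ h m₂ : ℂ) + g) - (inner ℂ h m₂ : ℂ) = g := by ring
      have h10 := norm_sub_le ((inner ℂ h m₂ : ℂ) + g) (inner ℂ h m₂ : ℂ)
      rw [h9] at h10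
      exact h10
    have hD : 0 < w2 ^ 2 * P + σ2 := by positivity
    have hDs : 0 < (1 - ω) ^ 2 * b * P + σ2 := by positivity
    rw [div_le_div_iff₀ hD hDs]
    have hγ : ‖g‖ ^ 2 = b := hb'.symm
    have key : ∀ t : ℝ,
        (a - ω ^ 2 * b) * ((‖g‖ - t) ^ 2 * P + σ2)
          - (a - t ^ 2) * ((1 - ω) ^ 2 * b * P + σ2)
        = ((a - ω ^ 2 * b) * P + (1 - ω) ^ 2 * b * P + σ2)
            * (t - ω * ‖g‖) ^ 2 := by
      intro t
      linear_combination (2 * P * (t * ‖g‖ - b * ω)) * hq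
        + (P * (a - a * ω ^ 2 - ρ * ω ^ 2 - 2 * b * ω ^ 2 + 2 * b * ω ^ 3)) * hγ
        + (2 * t * ω * ‖g‖ - ω ^ 2 * ‖g‖ ^ 2 - b * ω ^ 2) * hσ2
    have hC : 0 < (a - ω ^ 2 * b) * P + (1 - ω) ^ 2 * b * P + σ2 := by positivity
    rcases le_or_gt v (‖g‖) with hcase | hcase
    · -- v ≤ |g|
      have hw2l : ‖g‖ - v ≤ w2 := by linarith only [hada, hcase]
      have hw2sq : (‖g‖ - v) ^ 2 ≤ w2 ^ 2 :=
        pow_le_pow_left₀ (by linarith only [hcase]) hw2l 2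
      have s2 : (a - v ^ 2) * ((1 - ω) ^ 2 * b * P + σ2)
          ≤ (a - ω ^ 2 * b) * ((‖g‖ - v) ^ 2 * P + σ2) := by
        linarith only [key v, mul_nonneg hC.le (sq_nonneg (v - ω * ‖g‖))]
      have s3 : (a - ω ^ 2 * b) * ((‖g‖ - v) ^ 2 * P + σ2)
          ≤ (a - ω ^ 2 * b) * (w2 ^ 2 * P + σ2) := by
        apply mul_le_mul_of_nonneg_left _ hX.le
        have := mul_le_mul_of_nonneg_right hw2sq hP.le
        linarith only [this]
      have s1 : u ^ 2 * (P * ((1 - ω) ^ 2 * b * P + σ2))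
          ≤ (a - v ^ 2) * (P * ((1 - ω) ^ 2 * b * P + σ2)) :=
        mul_le_mul_of_nonneg_right (by linarith only [huv])
          (by positivity)
      have s2' := mul_le_mul_of_nonneg_right s2 hP.le
      have s3' := mul_le_mul_of_nonneg_right s3 hP.le
      linarith only [s1, s2', s3']
    · -- v > |g|
      have t3 : (a - ‖g‖ ^ 2) * ((1 - ω) ^ 2 * b * P + σ2)
          ≤ (a - ω ^ 2 * b) * σ2 := by
        have hkg := key (‖g‖)
        have hC2 : 0 ≤ ((a - ω ^ 2 * b) * P + (1 - ω) ^ 2 * b * P + σ2)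
            * (‖g‖ - ω * ‖g‖) ^ 2 :=
          mul_nonneg hC.le (sq_nonneg _)
        linarith only [hkg, hC2]
      have hγv : ‖g‖ ^ 2 ≤ v ^ 2 := pow_le_pow_left₀ hga.le hcase.le 2
      have t1 : u ^ 2 ≤ a - ‖g‖ ^ 2 := by linarith only [huv, hγv]
      have c1 : u ^ 2 * (P * ((1 - ω) ^ 2 * b * P + σ2))
          ≤ (a - ‖g‖ ^ 2) * (P * ((1 - ω) ^ 2 * b * P + σ2)) :=
        mul_le_mul_of_nonneg_right t1 (by positivity)
      have c2 : (a - ‖g‖ ^ 2) * ((1 - ω) ^ 2 * b * P + σ2) * P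
          ≤ (a - ω ^ 2 * b) * σ2 * P :=
        mul_le_mul_of_nonneg_right t3 hP.le
      have c3 : 0 ≤ (a - ω ^ 2 * b) * P * (w2 ^ 2 * P) :=
        mul_nonneg (mul_nonneg hX.le hP.le) (mul_nonneg (sq_nonneg w2) hP.le)
      linarith only [c1, c2, c3]
end

section
/- Fix a positive integer ν, a nonzero vector h ∈ ℂ^ν, a nonzero complex number g, and real numbers P > 0 and σ² > 0; set a = ‖h‖² and b = |g|². Let ω be any real number with 0 < ω ≤ min{1, √(a/b)}, and define m₁ = (√(a − ω²b)/a)·h and m₂ = (−ω g / a)·h. Then: (i) ‖m₁‖² + ‖m₂‖² = 1; (ii) |⟨h, m₁⟩|² = a − ω²b; (iii) |⟨h, m₂⟩ + g|² = (1 − ω)² b; consequently the achieved SINR equals Γ(m₁, m₂) = (a − ω²b) P / ((1 − ω)² b P + σ²). -/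
/-- For any feasible `ω` with `0 < ω ≤ min{1, √(a/b)}`, the precoder
`m₁ = (√(a − ω²b)/a)·h`, `m₂ = (−ω g / a)·h` uses exactly unit total power,
achieves desired-signal power `|⟨h, m₁⟩|² = a − ω²b`, residual interference power
`|⟨h, m₂⟩ + g|² = (1 − ω)² b`, and hence SINR `(a − ω²b)P/((1 − ω)²bP + σ²)`. -/
theorem stmt1 (ν : ℕ) (hν : 0 < ν) (h : EuclideanSpace ℂ (Fin ν)) (hh : h ≠ 0)
    (g : ℂ) (hg : g ≠ 0) (P σ2 : ℝ) (hP : 0 < P) (hσ : 0 < σ2) (ω : ℝ)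
    (hω0 : 0 < ω)
    (hω1 : ω ≤ min 1 (Real.sqrt (‖h‖ ^ 2 / ‖g‖ ^ 2))) :
    let a : ℝ := ‖h‖ ^ 2
    let b : ℝ := ‖g‖ ^ 2
    let m₁ : EuclideanSpace ℂ (Fin ν) :=
      ((Real.sqrt (a - ω ^ 2 * b) / a : ℝ) : ℂ) • h
    let m₂ : EuclideanSpace ℂ (Fin ν) := (-(ω : ℂ) * g / (a : ℂ)) • h
    ‖m₁‖ ^ 2 + ‖m₂‖ ^ 2 = 1 ∧
      ‖(inner ℂ h m₁ : ℂ)‖ ^ 2 = a - ω ^ 2 * b ∧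
      ‖(inner ℂ h m₂ : ℂ) + g‖ ^ 2 = (1 - ω) ^ 2 * b ∧
      ‖(inner ℂ h m₁ : ℂ)‖ ^ 2 * P /
          (‖(inner ℂ h m₂ : ℂ) + g‖ ^ 2 * P + σ2) =
        (a - ω ^ 2 * b) * P / ((1 - ω) ^ 2 * b * P + σ2) := by
  intro a b m₁ m₂
  have hhn : 0 < ‖h‖ := norm_pos_iff.mpr hh
  have ha : 0 < a := by positivity
  have hb : 0 < b := by
    have : 0 < ‖g‖ := norm_pos_iff.mpr hg
    positivity
  have hω2 : ω ≤ Real.sqrt (a / b) := le_trans hω1 (min_le_right _ _)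
  have hnn : 0 ≤ a - ω ^ 2 * b := by
    have h1 : ω ^ 2 ≤ a / b := by
      calc ω ^ 2 ≤ Real.sqrt (a / b) ^ 2 := by
            apply pow_le_pow_left₀ hω0.le hω2
        _ = a / b := Real.sq_sqrt (div_pos ha hb).le
    have := (le_div_iff₀ hb).mp h1
    linarith
  have hsq : Real.sqrt (a - ω ^ 2 * b) ^ 2 = a - ω ^ 2 * b := Real.sq_sqrt hnn
  have hinner : (inner ℂ h h : ℂ) = (a : ℂ) := by
    rw [inner_self_eq_norm_sq_to_K]; norm_num [a]
  have hi1 : (inner ℂ h m₁ : ℂ) = ((Real.sqrt (a - ω ^ 2 * b) / a : ℝ) : ℂ) * a := by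
    show (inner ℂ h (((Real.sqrt (a - ω ^ 2 * b) / a : ℝ) : ℂ) • h) : ℂ) = _
    rw [inner_smul_right, hinner]
  have hi2 : (inner ℂ h m₂ : ℂ) = (-(ω : ℂ) * g / (a : ℂ)) * a := by
    show (inner ℂ h ((-(ω : ℂ) * g / (a : ℂ)) • h) : ℂ) = _
    rw [inner_smul_right, hinner]
  have haC : (a : ℂ) ≠ 0 := by exact_mod_cast ha.ne'
  have h2 : ‖(inner ℂ h m₁ : ℂ)‖ ^ 2 = a - ω ^ 2 * b := by
    rw [hi1, norm_mul, mul_pow]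
    simp only [Complex.norm_real, Real.norm_eq_abs, sq_abs, abs_of_nonneg (div_nonneg (Real.sqrt_nonneg _) ha.le)]
    rw [div_pow, hsq]
    field_simp
  have h3 : ‖(inner ℂ h m₂ : ℂ) + g‖ ^ 2 = (1 - ω) ^ 2 * b := by
    rw [hi2]
    have : -(ω : ℂ) * g / (a : ℂ) * a + g = ((1 - ω : ℝ) : ℂ) * g := by
      rw [div_mul_cancel₀ _ haC]; push_cast; ring
    rw [this, norm_mul, mul_pow, Complex.norm_real, Real.norm_eq_abs, sq_abs]
  have h1 : ‖m₁‖ ^ 2 + ‖m₂‖ ^ 2 = 1 := by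
    have e1 : ‖m₁‖ = ‖((Real.sqrt (a - ω ^ 2 * b) / a : ℝ) : ℂ)‖ * ‖h‖ := by
      show ‖((Real.sqrt (a - ω ^ 2 * b) / a : ℝ) : ℂ) • h‖ = _
      rw [norm_smul]
    have e2 : ‖m₂‖ = ‖(-(ω : ℂ) * g / (a : ℂ))‖ * ‖h‖ := by
      show ‖(-(ω : ℂ) * g / (a : ℂ)) • h‖ = _
      rw [norm_smul]
    rw [e1, e2, mul_pow, mul_pow]
    have f1 : ‖((Real.sqrt (a - ω ^ 2 * b) / a : ℝ) : ℂ)‖ ^ 2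
        = (a - ω ^ 2 * b) / a ^ 2 := by
      rw [Complex.norm_real, Real.norm_eq_abs, sq_abs, div_pow, hsq]
    have f2 : ‖(-(ω : ℂ) * g / (a : ℂ))‖ ^ 2 = ω ^ 2 * b / a ^ 2 := by
      rw [norm_div, norm_mul, div_pow, mul_pow]
      simp only [norm_neg, Complex.norm_real, Real.norm_eq_abs, sq_abs, abs_of_pos hω0]
      rfl
    rw [f1, f2]
    field_simp
    ring
  exact ⟨h1, h2, h3, by rw [h2, h3]⟩
end

section
/- Let a, b, ρ > 0 be real numbers and define f(ω) = (a − bω²)/(b(1 − ω)² + ρ) and ω₁ = ((a + b + ρ) − √((a + b + ρ)² − 4ab)) / (2b). Then for every real ω with 0 < ω ≤ min{1, √(a/b)} one has f(ω) ≤ f(ω₁); that is, ω₁ maximizes f over the feasible interval (0, min{1, √(a/b)}]. -/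
/-- `ω₁ = ((a+b+ρ) − √((a+b+ρ)² − 4ab))/(2b)` maximizes
`f(ω) = (a − bω²)/(b(1 − ω)² + ρ)` over the interval `(0, min{1, √(a/b)}]`. -/
theorem stmt2 (a b ρ : ℝ) (ha : 0 < a) (hb : 0 < b) (hρ : 0 < ρ) :
    let f : ℝ → ℝ := fun ω => (a - b * ω ^ 2) / (b * (1 - ω) ^ 2 + ρ)
    let ω₁ : ℝ := ((a + b + ρ) - Real.sqrt ((a + b + ρ) ^ 2 - 4 * a * b)) / (2 * b)
    ∀ ω : ℝ, 0 < ω → ω ≤ min 1 (Real.sqrt (a / b)) → f ω ≤ f ω₁ := by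
  intro f ω₁ ω hω hωle
  have hfdef : ∀ x : ℝ, f x = (a - b * x ^ 2) / (b * (1 - x) ^ 2 + ρ) := fun _ => rfl
  have hω₁def0 : ω₁ = ((a + b + ρ) - Real.sqrt ((a + b + ρ) ^ 2 - 4 * a * b)) / (2 * b) := rfl
  clear_value f ω₁
  rw [hfdef, hfdef]
  set s : ℝ := Real.sqrt ((a + b + ρ) ^ 2 - 4 * a * b) with hsdef
  have hdisc : 0 ≤ (a + b + ρ) ^ 2 - 4 * a * b := by nlinarith [sq_nonneg (a - b), sq_nonneg ρ]
  have hs2 : s ^ 2 = (a + b + ρ) ^ 2 - 4 * a * b := Real.sq_sqrt hdisc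
  have hs0 : 0 < s := Real.sqrt_pos.mpr (by nlinarith [sq_nonneg (a - b)])
  have hsX : s < a + b + ρ := by nlinarith
  have hω₁def : ω₁ = ((a + b + ρ) - s) / (2 * b) := hω₁def0
  have hω₁pos : 0 < ω₁ := by
    rw [hω₁def]
    apply div_pos (by linarith) (by linarith)
  have hq : ω₁ * (2 * b) = (a + b + ρ) - s := by
    rw [hω₁def]
    field_simp
  have hroot : b * ω₁ ^ 2 = (a + b + ρ) * ω₁ - a := by
    have h4 : 4 * b * (b * ω₁ ^ 2 - ((a + b + ρ) * ω₁ - a)) = 0 := by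
      linear_combination (ω₁ * (2 * b) - (a + b + ρ) - s) * hq + hs2
    have h5 : b * ω₁ ^ 2 - ((a + b + ρ) * ω₁ - a) = 0 :=
      (mul_eq_zero.mp h4).resolve_left (by positivity)
    linarith [h5]
  have hnum₁ : 0 < a - b * ω₁ ^ 2 := by
    have hq2 : (a + b + ρ) * (ω₁ * (2 * b)) = (a + b + ρ) * ((a + b + ρ) - s) := by
      rw [hq]
    nlinarith [hq2, mul_pos hs0 (sub_pos.mpr hsX), hs2, hroot]
  have hDω : 0 < b * (1 - ω) ^ 2 + ρ := by positivity
  have hDω₁ : 0 < b * (1 - ω₁) ^ 2 + ρ := by positivity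
  rw [div_le_div_iff₀ hDω hDω₁]
  have key : ω₁ * ((a - b * ω₁ ^ 2) * (b * (1 - ω) ^ 2 + ρ)
      - (a - b * ω ^ 2) * (b * (1 - ω₁) ^ 2 + ρ))
      = b * (ω₁ - ω) ^ 2 * (a - b * ω₁ ^ 2) := by
    linear_combination (b * (ω₁ - ω) * (ω₁ + ω)) * hroot
  have h1 : 0 ≤ b * (ω₁ - ω) ^ 2 * (a - b * ω₁ ^ 2) := by positivity
  nlinarith [key, h1, hω₁pos]
end

section
/- Let a, b, ρ > 0 be real numbers and define ω₁ = ((a + b + ρ) − √((a + b + ρ)² − 4ab)) / (2b). Then ω₁ > 0; moreover, if a ≥ b then ω₁ < 1, and if a < b then ω₁ < √(a/b). In particular ω₁ always lies in the feasible interval (0, min{1, √(a/b)}]. -/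
/-- The smaller root `ω₁` of `bω² − (a+b+ρ)ω + a = 0` is positive;
it is less than `1` when `a ≥ b` and less than `√(a/b)` when `a < b`, so it
lies in the feasible interval `(0, min{1, √(a/b)}]`. -/
theorem stmt3 (a b ρ : ℝ) (ha : 0 < a) (hb : 0 < b) (hρ : 0 < ρ) :
    let ω₁ : ℝ := ((a + b + ρ) - Real.sqrt ((a + b + ρ) ^ 2 - 4 * a * b)) / (2 * b)
    0 < ω₁ ∧ (a ≥ b → ω₁ < 1) ∧ (a < b → ω₁ < Real.sqrt (a / b)) := by
  intro ω₁
  set s : ℝ := a + b + ρ with hs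
  have hspos : 0 < s := by positivity
  have hDpos : 0 < s ^ 2 - 4 * a * b := by
    have : s ^ 2 - 4 * a * b = (a - b) ^ 2 + ρ ^ 2 + 2 * ρ * (a + b) := by ring
    nlinarith [sq_nonneg (a - b)]
  set q : ℝ := Real.sqrt (s ^ 2 - 4 * a * b) with hq
  have hqnn : 0 ≤ q := Real.sqrt_nonneg _
  have hq2 : q ^ 2 = s ^ 2 - 4 * a * b := Real.sq_sqrt hDpos.le
  have hqlt : q < s := by nlinarith
  refine ⟨div_pos (by linarith) (by positivity), fun _ => ?_, fun _ => ?_⟩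
  · rw [div_lt_one (by positivity)]
    nlinarith [sq_nonneg (q - (s - 2 * b))]
  · set u : ℝ := Real.sqrt (a / b) with hu
    have hupos : 0 < u := Real.sqrt_pos.mpr (by positivity)
    have hu2 : u ^ 2 = a / b := Real.sq_sqrt (by positivity)
    have ht2 : (u * b) ^ 2 = a * b := by
      field_simp at hu2 ⊢; nlinarith [hu2]
    have htpos : 0 < u * b := by positivity
    have hst : 2 * (u * b) < s := by nlinarith
    have hkey : s - 2 * (u * b) < q := by
      nlinarith [sq_nonneg (q - (s - 2 * (u * b)))]
    rw [div_lt_iff₀ (by positivity)]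
    nlinarith
end

section
/- Let a, b, σ², P_T, P_max > 0 be real numbers, and set c = √(P_T) and M = √(P_max). Define h(ω, x) = (a − bω²) x² / (b(c − ωx)² + σ²). Define ω₁ = (P_T b + σ²)/(√(P_T P_max) b) and ω₂ = [ (P_max a + P_T b + σ²) − √((P_max a + P_T b + σ²)² − 4 P_T P_max a b) ] / (2 √(P_T P_max) b), and let ω* = min{1, √(a/b), ω₁, ω₂}. Then for every ω with 0 < ω ≤ min{1, √(a/b)} and every x with 0 < x ≤ M one has h(ω, x) ≤ h(ω*, M); that is, the SINR is jointly maximized by transmitting at full source power P_S = P_max with interference-suppression parameter ω*. -/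
/-- Key single-variable comparison for the SINR at full power, phrased via the
two roots `r2 ≤ rp` of the derivative-sign quadratic. -/
lemma stmt7_key (a b σ2 c M w v r2 rp : ℝ) (hb : 0 < b) (hc : 0 < c) (hM : 0 < M)
    (hle : r2 ≤ rp)
    (hsum : b * c * M * (r2 + rp) = a * M ^ 2 + b * c ^ 2 + σ2)
    (hprod : b * (r2 * rp) = a)
    (hcase : (v ≤ r2 ∧ w ≤ r2 ∧ w ≤ v) ∨ (v = r2 ∧ v ≤ w ∧ w ≤ rp)) :
    (a - b * w ^ 2) * M ^ 2 * (b * (c - v * M) ^ 2 + σ2) ≤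
      (a - b * v ^ 2) * M ^ 2 * (b * (c - w * M) ^ 2 + σ2) := by
  have hσ2 : σ2 = b * c * M * (r2 + rp) - a * M ^ 2 - b * c ^ 2 := by linarith
  have ha' : a = b * (r2 * rp) := hprod.symm
  have hid : (a - b * v ^ 2) * M ^ 2 * (b * (c - w * M) ^ 2 + σ2) -
      (a - b * w ^ 2) * M ^ 2 * (b * (c - v * M) ^ 2 + σ2) =
      b ^ 2 * c * M ^ 3 * (v - w) *
        ((v - r2) * (w - rp) + (v - rp) * (w - r2)) := by
    rw [hσ2, ha']; ring
  have key : 0 ≤ b ^ 2 * c * M ^ 3 * (v - w) *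
      ((v - r2) * (w - rp) + (v - rp) * (w - r2)) := by
    have hpos : 0 < b ^ 2 * c * M ^ 3 := by positivity
    rcases hcase with ⟨h1, h2, h3⟩ | ⟨h1, h2, h3⟩
    · have : 0 ≤ (v - r2) * (w - rp) + (v - rp) * (w - r2) := by nlinarith
      have : 0 ≤ (v - w) * ((v - r2) * (w - rp) + (v - rp) * (w - r2)) := by nlinarith
      nlinarith
    · have heq : (v - w) * ((v - r2) * (w - rp) + (v - rp) * (w - r2)) =
          (w - v) * ((rp - v) * (w - v)) := by rw [h1]; ring
      have hnn : 0 ≤ (w - v) * ((rp - v) * (w - v)) := by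
        have h4 : v ≤ rp := h1 ▸ hle
        exact mul_nonneg (sub_nonneg.2 h2) (mul_nonneg (sub_nonneg.2 h4) (sub_nonneg.2 h2))
      nlinarith
  linarith [hid ▸ key]

set_option maxHeartbeats 800000 in
/-- Main auxiliary inequality with `c = √P_T`, `M = √P_max`, `q = √disc`
abstracted away. -/
lemma stmt7_aux (a b σ2 c M q ω x ωs : ℝ) (ha : 0 < a) (hb : 0 < b) (hσ : 0 < σ2)
    (hc : 0 < c) (hM : 0 < M) (hq0 : 0 ≤ q)
    (hq2 : q ^ 2 = (M ^ 2 * a + c ^ 2 * b + σ2) ^ 2 - 4 * c ^ 2 * M ^ 2 * a * b)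
    (hωs : ωs = min 1 (min (Real.sqrt (a / b))
      (min ((c ^ 2 * b + σ2) / (c * M * b))
        ((M ^ 2 * a + c ^ 2 * b + σ2 - q) / (2 * (c * M) * b)))))
    (hω : 0 < ω) (hωm : ω ≤ min 1 (Real.sqrt (a / b))) (hx : 0 < x) (hxM : x ≤ M) :
    (a - b * ω ^ 2) * x ^ 2 / (b * (c - ω * x) ^ 2 + σ2) ≤
      (a - b * ωs ^ 2) * M ^ 2 / (b * (c - ωs * M) ^ 2 + σ2) := by
  set S : ℝ := M ^ 2 * a + c ^ 2 * b + σ2 with hS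
  set w1 : ℝ := (c ^ 2 * b + σ2) / (c * M * b) with hw1
  set r2 : ℝ := (S - q) / (2 * (c * M) * b) with hr2
  set rp : ℝ := (S + q) / (2 * (c * M) * b) with hrp
  have hSpos : 0 < S := by rw [hS]; positivity
  have hcMb : (0:ℝ) < 2 * (c * M) * b := by positivity
  have h4pos : (0:ℝ) < 4 * c ^ 2 * M ^ 2 * a * b := by positivity
  have hqS : q ≤ S := by nlinarith [hq2, hq0, hSpos, h4pos]
  have hler : r2 ≤ rp := by
    rw [hr2, hrp, div_le_div_iff₀ hcMb hcMb]
    nlinarith [mul_nonneg hq0 hcMb.le]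
  have hr2nn : 0 ≤ r2 := by
    rw [hr2]; exact div_nonneg (by linarith) hcMb.le
  have hrpnn : 0 ≤ rp := hr2nn.trans hler
  have hsum : b * c * M * (r2 + rp) = a * M ^ 2 + b * c ^ 2 + σ2 := by
    have hsum' : r2 + rp = S / (c * M * b) := by
      rw [hr2, hrp]; field_simp; ring
    rw [hsum', hS]; field_simp
  have hprod : b * (r2 * rp) = a := by
    have hqq : (S - q) * (S + q) = 4 * c ^ 2 * M ^ 2 * a * b := by
      linear_combination (-1 : ℝ) * hq2
    rw [hr2, hrp, div_mul_div_comm, hqq,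
      show 2 * (c * M) * b * (2 * (c * M) * b) = 4 * c ^ 2 * M ^ 2 * b ^ 2 by ring]
    field_simp
  have hr2w1 : r2 ≤ w1 := by
    have hq2u : q ^ 2 = (S - 2 * (c ^ 2 * b + σ2)) ^ 2 + 4 * M ^ 2 * a * σ2 := by
      rw [hq2, hS]; ring
    have hp4 : (0:ℝ) < 4 * M ^ 2 * a * σ2 := by positivity
    have huq : S - 2 * (c ^ 2 * b + σ2) ≤ q := by nlinarith [hq2u, hq0, hp4]
    have hw1' : w1 = 2 * (c ^ 2 * b + σ2) / (2 * (c * M) * b) := by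
      rw [hw1]; field_simp
    rw [hr2, hw1']
    gcongr
    linarith [huq]
  have hmin12 : min w1 r2 = r2 := min_eq_right hr2w1
  have hωs_eq : ωs = min (min 1 (Real.sqrt (a / b))) r2 := by
    rw [hωs, hmin12, ← min_assoc]
  have hωs_le_r2 : ωs ≤ r2 := by rw [hωs_eq]; exact min_le_right _ _
  have hab_rp : Real.sqrt (a / b) ≤ rp := by
    have h1 : a / b = r2 * rp := by
      field_simp
      linarith [hprod]
    have h2 : a / b ≤ rp ^ 2 := by
      calc a / b = r2 * rp := h1
        _ ≤ rp * rp := mul_le_mul_of_nonneg_right hler hrpnn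
        _ = rp ^ 2 := by ring
    calc Real.sqrt (a / b) ≤ Real.sqrt (rp ^ 2) := Real.sqrt_le_sqrt h2
      _ = rp := Real.sqrt_sq hrpnn
  -- reduce to full power x = M
  set v : ℝ := ω * x / M with hv
  have hv0 : 0 < v := by rw [hv]; positivity
  have hvω : v ≤ ω := by
    rw [hv, div_le_iff₀ hM]
    exact mul_le_mul_of_nonneg_left hxM hω.le
  have hvm : v ≤ min 1 (Real.sqrt (a / b)) := le_trans hvω hωm
  have hvM : v * M = ω * x := div_mul_cancel₀ _ hM.ne'
  have hden1 : (0:ℝ) < b * (c - ω * x) ^ 2 + σ2 := by positivity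
  have hden2 : (0:ℝ) < b * (c - v * M) ^ 2 + σ2 := by positivity
  have hden3 : (0:ℝ) < b * (c - ωs * M) ^ 2 + σ2 := by positivity
  have hstep1 : (a - b * ω ^ 2) * x ^ 2 / (b * (c - ω * x) ^ 2 + σ2) ≤
      (a - b * v ^ 2) * M ^ 2 / (b * (c - v * M) ^ 2 + σ2) := by
    rw [hvM, div_le_div_iff₀ hden1 hden1]
    have hv2 : v ^ 2 * M ^ 2 = ω ^ 2 * x ^ 2 := by
      rw [← mul_pow, hvM, mul_pow]
    have hx2 : x ^ 2 ≤ M ^ 2 := pow_le_pow_left₀ hx.le hxM 2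
    have hnum : (a - b * ω ^ 2) * x ^ 2 ≤ (a - b * v ^ 2) * M ^ 2 := by
      have haxM : a * x ^ 2 ≤ a * M ^ 2 := mul_le_mul_of_nonneg_left hx2 ha.le
      have hv2b : b * (v ^ 2 * M ^ 2) = b * (ω ^ 2 * x ^ 2) := by rw [hv2]
      linarith [hv2b, haxM]
    exact mul_le_mul_of_nonneg_right hnum hden1.le
  refine le_trans hstep1 ?_
  rw [div_le_div_iff₀ hden2 hden3]
  apply stmt7_key a b σ2 c M v ωs r2 rp hb hc hM hler hsum hprod
  rcases le_or_gt v ωs with hcase | hcase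
  · exact Or.inl ⟨hωs_le_r2, le_trans hcase hωs_le_r2, hcase⟩
  · rcases le_total (min 1 (Real.sqrt (a / b))) r2 with h' | h'
    · exfalso
      have hws : ωs = min 1 (Real.sqrt (a / b)) := by rw [hωs_eq, min_eq_left h']
      rw [hws] at hcase
      exact absurd hvm (not_le.2 hcase)
    · have hωsr2 : ωs = r2 := by rw [hωs_eq, min_eq_right h']
      have hvab : v ≤ Real.sqrt (a / b) := le_trans hvm (min_le_right _ _)
      exact Or.inr ⟨hωsr2, hcase.le, le_trans hvab hab_rp⟩

/-- The SINR `h(ω, x) = (a − bω²)x²/(b(c − ωx)² + σ²)` is jointly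
maximized over `0 < ω ≤ min{1, √(a/b)}` and `0 < x ≤ M = √(P_max)` by
transmitting at full source power `x = M` with parameter
`ω* = min{1, √(a/b), ω₁, ω₂}`. -/
theorem stmt7 (a b σ2 PT Pmax : ℝ) (ha : 0 < a) (hb : 0 < b) (hσ : 0 < σ2)
    (hPT : 0 < PT) (hPmax : 0 < Pmax) :
    let c : ℝ := Real.sqrt PT
    let M : ℝ := Real.sqrt Pmax
    let h : ℝ → ℝ → ℝ := fun ω x =>
      (a - b * ω ^ 2) * x ^ 2 / (b * (c - ω * x) ^ 2 + σ2)
    let ω₁ : ℝ := (PT * b + σ2) / (Real.sqrt (PT * Pmax) * b)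
    let ω₂ : ℝ :=
      ((Pmax * a + PT * b + σ2) -
          Real.sqrt ((Pmax * a + PT * b + σ2) ^ 2 - 4 * PT * Pmax * a * b)) /
        (2 * Real.sqrt (PT * Pmax) * b)
    let ωs : ℝ := min 1 (min (Real.sqrt (a / b)) (min ω₁ ω₂))
    ∀ ω x : ℝ, 0 < ω → ω ≤ min 1 (Real.sqrt (a / b)) → 0 < x → x ≤ M →
      h ω x ≤ h ωs M := by
  intro c M h ω₁ ω₂ ωs ω x hω hωm hx hxM
  have hc : (0:ℝ) < c := Real.sqrt_pos.2 hPT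
  have hM : (0:ℝ) < M := Real.sqrt_pos.2 hPmax
  have hc2 : c ^ 2 = PT := Real.sq_sqrt hPT.le
  have hM2 : M ^ 2 = Pmax := Real.sq_sqrt hPmax.le
  have hK : Real.sqrt (PT * Pmax) = c * M := Real.sqrt_mul hPT.le Pmax
  have hd0 : 0 ≤ (M ^ 2 * a + c ^ 2 * b + σ2) ^ 2 - 4 * c ^ 2 * M ^ 2 * a * b := by
    nlinarith [sq_nonneg (M ^ 2 * a - c ^ 2 * b + σ2),
      mul_pos hσ (mul_pos (mul_pos (pow_pos hc 2) hb) (mul_pos (pow_pos hM 2) ha)),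
      mul_pos hσ (mul_pos (pow_pos hc 2) hb)]
  have hωs' : ωs = min 1 (min (Real.sqrt (a / b))
      (min ((c ^ 2 * b + σ2) / (c * M * b))
        ((M ^ 2 * a + c ^ 2 * b + σ2 -
            Real.sqrt ((M ^ 2 * a + c ^ 2 * b + σ2) ^ 2 - 4 * c ^ 2 * M ^ 2 * a * b)) /
          (2 * (c * M) * b)))) := by
    show min 1 (min (Real.sqrt (a / b))
      (min ((PT * b + σ2) / (Real.sqrt (PT * Pmax) * b))
        (((Pmax * a + PT * b + σ2) -
            Real.sqrt ((Pmax * a + PT * b + σ2) ^ 2 - 4 * PT * Pmax * a * b)) /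
          (2 * Real.sqrt (PT * Pmax) * b)))) = _
    rw [hK, ← hc2, ← hM2]
  show (a - b * ω ^ 2) * x ^ 2 / (b * (c - ω * x) ^ 2 + σ2) ≤
      (a - b * ωs ^ 2) * M ^ 2 / (b * (c - ωs * M) ^ 2 + σ2)
  exact stmt7_aux a b σ2 c M
    (Real.sqrt ((M ^ 2 * a + c ^ 2 * b + σ2) ^ 2 - 4 * c ^ 2 * M ^ 2 * a * b)) ω x ωs
    ha hb hσ hc hM (Real.sqrt_nonneg _) (Real.sq_sqrt hd0) hωs' hω hωm hx hxM
end

section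
/- Let a, b, c, σ² > 0 be real numbers and fix ω with 0 < ω and a − bω² > 0. Define h(ω, x) = (a − bω²) x² / (b(c − ωx)² + σ²) and x* = (bc² + σ²)/(bcω). Then for every x > 0 one has h(ω, x) ≤ h(ω, x*); that is, for fixed interference parameter ω the source amplitude x* maximizes the SINR over all positive amplitudes. -/
/-- For fixed interference parameter `ω`, the source amplitude
`x* = (bc² + σ²)/(bcω)` maximizes the SINR
`h(ω, x) = (a − bω²)x²/(b(c − ωx)² + σ²)` over all positive amplitudes `x`. -/
theorem stmt8 (a b c σ2 : ℝ) (ha : 0 < a) (hb : 0 < b) (hc : 0 < c)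
    (hσ : 0 < σ2) (ω : ℝ) (hω : 0 < ω) (hfeas : 0 < a - b * ω ^ 2) :
    let h : ℝ → ℝ := fun x =>
      (a - b * ω ^ 2) * x ^ 2 / (b * (c - ω * x) ^ 2 + σ2)
    let xs : ℝ := (b * c ^ 2 + σ2) / (b * c * ω)
    ∀ x : ℝ, 0 < x → h x ≤ h xs := by
  intro h xs x hx
  have hdx : 0 < b * (c - ω * x) ^ 2 + σ2 := by positivity
  have hval : h xs = (a - b * ω ^ 2) * (b * c ^ 2 + σ2) / (b * σ2 * ω ^ 2) := by
    show (a - b * ω ^ 2) * xs ^ 2 / (b * (c - ω * xs) ^ 2 + σ2) = _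
    have hxs : xs = (b * c ^ 2 + σ2) / (b * c * ω) := rfl
    rw [hxs]
    have h1 : c - ω * ((b * c ^ 2 + σ2) / (b * c * ω)) = -σ2 / (b * c) := by
      field_simp; ring
    rw [h1]
    field_simp
    ring
  rw [hval]
  show (a - b * ω ^ 2) * x ^ 2 / (b * (c - ω * x) ^ 2 + σ2) ≤ _
  rw [div_le_div_iff₀ hdx (by positivity)]
  nlinarith [mul_nonneg hfeas.le (sq_nonneg (b * c ^ 2 + σ2 - b * c * ω * x))]
end

section
/- Let a, b, c, σ² > 0 be real numbers and fix x > 0. Define h(ω, x) = (a − bω²) x² / (b(c − ωx)² + σ²) and ω*(x) = [ (a x² + b c² + σ²) − √((a x² + b c² + σ²)² − 4 a b c² x²) ] / (2 b c x). Then the discriminant (a x² + b c² + σ²)² − 4 a b c² x² is positive, and for every ω with 0 < ω ≤ min{1, √(a/b)} one has h(ω, x) ≤ h(ω*(x), x); that is, for fixed source amplitude x the parameter ω*(x) maximizes the SINR over the feasible interval. -/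
/-- For fixed source amplitude `x > 0`, the discriminant
`(ax² + bc² + σ²)² − 4abc²x²` is positive, and the parameter
`ω*(x) = ((ax² + bc² + σ²) − √((ax² + bc² + σ²)² − 4abc²x²))/(2bcx)` maximizes
the SINR `h(ω, x) = (a − bω²)x²/(b(c − ωx)² + σ²)` over `0 < ω ≤ min{1, √(a/b)}`. -/
theorem stmt10 (a b c σ2 : ℝ) (ha : 0 < a) (hb : 0 < b) (hc : 0 < c)
    (hσ : 0 < σ2) (x : ℝ) (hx : 0 < x) :
    let h : ℝ → ℝ := fun ω =>
      (a - b * ω ^ 2) * x ^ 2 / (b * (c - ω * x) ^ 2 + σ2)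
    let ωs : ℝ :=
      ((a * x ^ 2 + b * c ^ 2 + σ2) -
          Real.sqrt ((a * x ^ 2 + b * c ^ 2 + σ2) ^ 2 - 4 * a * b * c ^ 2 * x ^ 2)) /
        (2 * b * c * x)
    0 < (a * x ^ 2 + b * c ^ 2 + σ2) ^ 2 - 4 * a * b * c ^ 2 * x ^ 2 ∧
      ∀ ω : ℝ, 0 < ω → ω ≤ min 1 (Real.sqrt (a / b)) → h ω ≤ h ωs := by
  dsimp only
  have hS : 0 < a * x ^ 2 + b * c ^ 2 + σ2 := by positivity
  have hD : 0 < (a * x ^ 2 + b * c ^ 2 + σ2) ^ 2 - 4 * a * b * c ^ 2 * x ^ 2 := by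
    nlinarith [sq_nonneg (a * x ^ 2 - b * c ^ 2), mul_pos hσ (mul_pos ha (pow_pos hx 2)),
      mul_pos hσ (mul_pos hb (pow_pos hc 2)), sq_nonneg σ2]
  refine ⟨hD, ?_⟩
  set s : ℝ := Real.sqrt ((a * x ^ 2 + b * c ^ 2 + σ2) ^ 2 - 4 * a * b * c ^ 2 * x ^ 2) with hs
  set w : ℝ := ((a * x ^ 2 + b * c ^ 2 + σ2) - s) / (2 * b * c * x) with hwdef
  have hs2 : s ^ 2 = (a * x ^ 2 + b * c ^ 2 + σ2) ^ 2 - 4 * a * b * c ^ 2 * x ^ 2 :=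
    Real.sq_sqrt hD.le
  have hsnn : 0 ≤ s := Real.sqrt_nonneg _
  have hbcx : (2 * b * c * x) ≠ 0 := by positivity
  have hw : 2 * b * c * x * w = (a * x ^ 2 + b * c ^ 2 + σ2) - s := by
    rw [hwdef]; field_simp
  clear_value s w
  have hq : b * c * x * w ^ 2 - (a * x ^ 2 + b * c ^ 2 + σ2) * w + a * c * x = 0 := by
    have h4 : 4 * b * c * x *
        (b * c * x * w ^ 2 - (a * x ^ 2 + b * c ^ 2 + σ2) * w + a * c * x) = 0 := by
      linear_combination (2 * b * c * x * w - (a * x ^ 2 + b * c ^ 2 + σ2) - s) * hw + hs2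
    rcases mul_eq_zero.mp h4 with h0 | h0
    · exact absurd h0 (by positivity)
    · exact h0
  intro ω _ _
  have hdω : 0 < b * (c - ω * x) ^ 2 + σ2 := by positivity
  have hdw : 0 < b * (c - w * x) ^ 2 + σ2 := by positivity
  rw [div_le_div_iff₀ hdω hdw]
  have key : (a - b * w ^ 2) * x ^ 2 * (b * (c - ω * x) ^ 2 + σ2)
      - (a - b * ω ^ 2) * x ^ 2 * (b * (c - w * x) ^ 2 + σ2)
      = b * x ^ 2 * s * (ω - w) ^ 2 := by
    linear_combination (2 * b * x ^ 2 * (w - ω)) * hq - (b * x ^ 2 * (ω - w) ^ 2) * hw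
  nlinarith [mul_nonneg (mul_nonneg (mul_nonneg hb.le (sq_nonneg x)) hsnn) (sq_nonneg (ω - w)), key]
end

section
/- Fix a positive integer ν, a nonzero vector h ∈ ℂ^ν, a real number ω, and a complex number g, and suppose ω²|g|² ≤ ‖h‖². Among all pairs (m₁, m₂) of vectors in ℂ^ν satisfying ⟨h, m₂⟩ = −ω g and ‖m₁‖² + ‖m₂‖² ≤ 1, the maximum possible value of |⟨h, m₁⟩| is β = √(‖h‖² − ω²|g|²), attained by m₁ = (β/‖h‖²)·h together with m₂ = −(ω g/‖h‖²)·h; i.e. for every feasible pair (m₁, m₂), |⟨h, m₁⟩|² ≤ ‖h‖² − ω²|g|². -/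
/-- Subject to the linear interference constraint
`⟨h, m₂⟩ = −ω g` and the total-power constraint `‖m₁‖² + ‖m₂‖² ≤ 1`, the
maximum of `|⟨h, m₁⟩|` is `β = √(‖h‖² − ω²|g|²)`, attained by
`m₁ = (β/‖h‖²)·h` and `m₂ = −(ωg/‖h‖²)·h`. -/
theorem stmt13 (ν : ℕ) (hν : 0 < ν) (h : EuclideanSpace ℂ (Fin ν)) (hh : h ≠ 0)
    (ω : ℝ) (g : ℂ) (hfeas : ω ^ 2 * ‖g‖ ^ 2 ≤ ‖h‖ ^ 2) :
    let β : ℝ := Real.sqrt (‖h‖ ^ 2 - ω ^ 2 * ‖g‖ ^ 2)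
    let m₁s : EuclideanSpace ℂ (Fin ν) := ((β / ‖h‖ ^ 2 : ℝ) : ℂ) • h
    let m₂s : EuclideanSpace ℂ (Fin ν) := (-((ω : ℂ) * g) / ((‖h‖ ^ 2 : ℝ) : ℂ)) • h
    (inner ℂ h m₂s : ℂ) = -((ω : ℂ) * g) ∧
      ‖m₁s‖ ^ 2 + ‖m₂s‖ ^ 2 ≤ 1 ∧
      ‖(inner ℂ h m₁s : ℂ)‖ = β ∧
      ∀ m₁ m₂ : EuclideanSpace ℂ (Fin ν),
        (inner ℂ h m₂ : ℂ) = -((ω : ℂ) * g) → ‖m₁‖ ^ 2 + ‖m₂‖ ^ 2 ≤ 1 →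
          ‖(inner ℂ h m₁ : ℂ)‖ ^ 2 ≤ ‖h‖ ^ 2 - ω ^ 2 * ‖g‖ ^ 2 := by
  intro β m₁s m₂s
  have hn : (0:ℝ) < ‖h‖ := norm_pos_iff.mpr hh
  have hn2 : (0:ℝ) < ‖h‖ ^ 2 := by positivity
  have hn2' : ((‖h‖ ^ 2 : ℝ) : ℂ) ≠ 0 := by
    exact_mod_cast ne_of_gt hn2
  have hinner : (inner ℂ h h : ℂ) = ((‖h‖ ^ 2 : ℝ) : ℂ) := by
    rw [inner_self_eq_norm_sq_to_K]; norm_num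
  have hβnn : 0 ≤ β := Real.sqrt_nonneg _
  have hβsq : β ^ 2 = ‖h‖ ^ 2 - ω ^ 2 * ‖g‖ ^ 2 :=
    Real.sq_sqrt (by linarith)
  refine ⟨?_, ?_, ?_, ?_⟩
  · rw [show m₂s = (-((ω : ℂ) * g) / ((‖h‖ ^ 2 : ℝ) : ℂ)) • h from rfl,
      inner_smul_right, hinner]
    have hcn : ((‖h‖:ℝ) : ℂ) ≠ 0 := by exact_mod_cast hn.ne'
    field_simp
  · have e1 : ‖m₁s‖ = |β / ‖h‖ ^ 2| * ‖h‖ := by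
      rw [show m₁s = ((β / ‖h‖ ^ 2 : ℝ) : ℂ) • h from rfl, norm_smul,
        Complex.norm_real, Real.norm_eq_abs]
    have e2 : ‖m₂s‖ = ‖(-((ω : ℂ) * g) / ((‖h‖ ^ 2 : ℝ) : ℂ))‖ * ‖h‖ := by
      rw [show m₂s = (-((ω : ℂ) * g) / ((‖h‖ ^ 2 : ℝ) : ℂ)) • h from rfl, norm_smul]
    rw [e1, e2, norm_div, norm_neg, norm_mul]
    rw [abs_of_nonneg (by positivity), Complex.norm_real, Real.norm_eq_abs, Complex.norm_real, Real.norm_eq_abs,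
      abs_of_nonneg hn2.le]
    have : (β / ‖h‖ ^ 2 * ‖h‖) ^ 2 + (|ω| * ‖g‖ / ‖h‖ ^ 2 * ‖h‖) ^ 2
        = (β ^ 2 + ω ^ 2 * ‖g‖ ^ 2) / ‖h‖ ^ 2 := by
      field_simp
      ring_nf
      rw [sq_abs]
      ring
    rw [this, hβsq]
    rw [div_le_one hn2]
    linarith
  · rw [show m₁s = ((β / ‖h‖ ^ 2 : ℝ) : ℂ) • h from rfl, inner_smul_right, hinner]
    rw [norm_mul, Complex.norm_real, Real.norm_eq_abs, Complex.norm_real, Real.norm_eq_abs,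
      abs_of_nonneg (by positivity), abs_of_nonneg hn2.le]
    field_simp
  · intro m₁ m₂ hc hp
    have cs1 : ‖(inner ℂ h m₁ : ℂ)‖ ≤ ‖h‖ * ‖m₁‖ := by
      simpa using norm_inner_le_norm (𝕜 := ℂ) h m₁
    have cs2 : ‖(inner ℂ h m₂ : ℂ)‖ ≤ ‖h‖ * ‖m₂‖ := by
      simpa using norm_inner_le_norm (𝕜 := ℂ) h m₂
    have habs2 : ‖(inner ℂ h m₂ : ℂ)‖ = |ω| * ‖g‖ := by
      rw [hc, norm_neg, norm_mul, Complex.norm_real, Real.norm_eq_abs]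
    rw [habs2] at cs2
    have h1 : ‖(inner ℂ h m₁ : ℂ)‖ ^ 2 ≤ ‖h‖ ^ 2 * ‖m₁‖ ^ 2 := by
      nlinarith [norm_nonneg (inner ℂ h m₁ : ℂ), norm_nonneg m₁, norm_nonneg h]
    have h2 : ω ^ 2 * ‖g‖ ^ 2 ≤ ‖h‖ ^ 2 * ‖m₂‖ ^ 2 := by
      have := mul_self_le_mul_self
        (by positivity : (0:ℝ) ≤ |ω| * ‖g‖) cs2
      nlinarith [sq_abs ω]
    nlinarith [norm_nonneg m₂, sq_nonneg ‖m₂‖]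
end
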